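/- Let H be a finite simple graph with E ≥ 1 edges, T triangles, and F four-cycles, and set r_3 = T/E and r_4 = F/E. Then 3·r_3·(3·r_3 − 1) ≤ 4·r_4; equivalently, 3T(3T − E) ≤ 4FE. -/

import Mathlib

open Finset

/-- The number of ordered 4-tuples `(a,b,c,d)` of pairwise distinct vertices with
`a~b, b~c, c~d, d~a`.  Each four-cycle subgraph corresponds to exactly 8 such
tuples, so the number of four-cycles of `G` is this quantity divided by 8. -/
def orderedFourCycleCount {V : Type*} [Fintype V] [DecidableEq V]
    (G : SimpleGraph V) [DecidableRel G.Adj] : ℕ :=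
  ((Finset.univ : Finset (V × V × V × V)).filter
    (fun p => p.1 ≠ p.2.1 ∧ p.1 ≠ p.2.2.1 ∧ p.1 ≠ p.2.2.2 ∧
      p.2.1 ≠ p.2.2.1 ∧ p.2.1 ≠ p.2.2.2 ∧ p.2.2.1 ≠ p.2.2.2 ∧
      G.Adj p.1 p.2.1 ∧ G.Adj p.2.1 p.2.2.1 ∧ G.Adj p.2.2.1 p.2.2.2 ∧
      G.Adj p.2.2.2 p.1)).card

section Aux

variable {V : Type*} [Fintype V] [DecidableEq V] (H : SimpleGraph V) [DecidableRel H.Adj]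

/-- Ordered adjacent pairs. -/
def pairSetAux : Finset (V × V) := univ.filter (fun p => H.Adj p.1 p.2)

/-- Number of common neighbours of the two components of a pair. -/
def comNAux (p : V × V) : ℕ := (univ.filter (fun x => H.Adj p.1 x ∧ H.Adj p.2 x)).card

/-- Ordered triangles. -/
def triSetAux : Finset (V × V × V) :=
  univ.filter (fun t => H.Adj t.1 t.2.1 ∧ H.Adj t.1 t.2.2 ∧ H.Adj t.2.1 t.2.2)

/-- Ordered (edge, pair of common neighbours) configurations. -/
def quadSetAux : Finset (V × V × V × V) :=
  univ.filter (fun q => H.Adj q.1 q.2.1 ∧ (H.Adj q.1 q.2.2.1 ∧ H.Adj q.2.1 q.2.2.1) ∧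
    (H.Adj q.1 q.2.2.2 ∧ H.Adj q.2.1 q.2.2.2))

lemma pairSetAux_card : (pairSetAux H).card = 2 * H.edgeFinset.card := by
  rw [← H.sum_degrees_eq_twice_card_edges]
  rw [Finset.card_eq_sum_card_fiberwise (f := fun p : V × V => p.1) (t := univ)
    (fun p _ => mem_univ _)]
  refine Finset.sum_congr rfl fun u _ => ?_
  rw [SimpleGraph.degree]
  refine Finset.card_nbij' (fun p => p.2) (fun x => (u, x)) ?_ ?_ ?_ ?_
  · rintro ⟨a, b⟩ hp
    simp only [pairSetAux, mem_coe, mem_filter, mem_univ, true_and] at hp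
    obtain ⟨h1, h2⟩ := hp
    subst h2
    simpa using h1
  · intro x hx
    simp only [mem_coe, SimpleGraph.mem_neighborFinset] at hx
    simp [pairSetAux, hx]
  · rintro ⟨a, b⟩ hp
    simp only [pairSetAux, mem_coe, mem_filter] at hp
    simp [hp.2]
  · intro x _; rfl

lemma triSetAux_card_sum : (triSetAux H).card = ∑ p ∈ pairSetAux H, comNAux H p := by
  rw [Finset.card_eq_sum_card_fiberwise (f := fun t : V × V × V => (t.1, t.2.1))
    (t := pairSetAux H) ?hmem]
  case hmem =>
    rintro ⟨a, b, c⟩ ht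
    simp only [triSetAux, mem_coe, mem_filter, mem_univ, true_and] at ht
    simp [pairSetAux, ht.1]
  refine Finset.sum_congr rfl fun p hp => ?_
  refine Finset.card_nbij' (fun t => t.2.2) (fun x => (p.1, p.2, x)) ?_ ?_ ?_ ?_
  · rintro ⟨a, b, c⟩ ht
    simp only [triSetAux, mem_coe, mem_filter, mem_univ, true_and, Prod.ext_iff] at ht
    obtain ⟨⟨h1, h2, h3⟩, h4, h5⟩ := ht
    subst h4; subst h5
    simp [h2, h3]
  · intro x hx
    simp only [mem_coe, mem_filter, mem_univ, true_and] at hx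
    simp only [pairSetAux, mem_filter, mem_univ, true_and] at hp
    simp [triSetAux, hp, hx.1, hx.2]
  · rintro ⟨a, b, c⟩ ht
    simp only [mem_coe, mem_filter, Prod.ext_iff] at ht
    obtain ⟨-, h4, h5⟩ := ht
    simp [← h4, ← h5]
  · intro x _; rfl

lemma quadSetAux_card_sum : (quadSetAux H).card = ∑ p ∈ pairSetAux H, (comNAux H p) ^ 2 := by
  rw [Finset.card_eq_sum_card_fiberwise (f := fun q : V × V × V × V => (q.1, q.2.1))
    (t := pairSetAux H) ?hmem]
  case hmem =>
    rintro ⟨a, b, c, d⟩ hq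
    simp only [quadSetAux, mem_coe, mem_filter, mem_univ, true_and] at hq
    simp [pairSetAux, hq.1]
  refine Finset.sum_congr rfl fun p hp => ?_
  have : (comNAux H p) ^ 2 =
      ((univ.filter (fun x => H.Adj p.1 x ∧ H.Adj p.2 x)) ×ˢ
       (univ.filter (fun x => H.Adj p.1 x ∧ H.Adj p.2 x))).card := by
    rw [Finset.card_product, sq, comNAux]
  rw [this]
  refine Finset.card_nbij' (fun q => (q.2.2.1, q.2.2.2)) (fun z => (p.1, p.2, z.1, z.2))
    ?_ ?_ ?_ ?_
  · rintro ⟨a, b, c, d⟩ hq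
    simp only [mem_coe, mem_filter, Prod.ext_iff, quadSetAux, mem_univ, true_and] at hq
    obtain ⟨⟨h1, ⟨h2, h3⟩, h4, h5⟩, h6, h7⟩ := hq
    subst h6; subst h7
    simp [Finset.mem_product, h2, h3, h4, h5]
  · rintro ⟨x, y⟩ hz
    simp only [mem_coe, Finset.mem_product, mem_filter, mem_univ, true_and] at hz
    simp only [pairSetAux, mem_filter, mem_univ, true_and] at hp
    simp [quadSetAux, hp, hz.1.1, hz.1.2, hz.2.1, hz.2.2]
  · rintro ⟨a, b, c, d⟩ hq
    simp only [mem_coe, mem_filter, Prod.ext_iff] at hq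
    obtain ⟨-, h6, h7⟩ := hq
    simp [← h6, ← h7]
  · rintro ⟨x, y⟩ _; rfl

lemma quadSetAux_card_le :
    (quadSetAux H).card ≤ (triSetAux H).card + orderedFourCycleCount H := by
  classical
  have hsplit := Finset.card_filter_add_card_filter_not
    (s := quadSetAux H) (p := fun q : V × V × V × V => q.2.2.1 = q.2.2.2)
  have hdiag : ((quadSetAux H).filter (fun q => q.2.2.1 = q.2.2.2)).card ≤
      (triSetAux H).card := by
    refine Finset.card_le_card_of_injOn (fun q => (q.1, q.2.1, q.2.2.1)) ?_ ?_
    · rintro ⟨a, b, c, d⟩ hq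
      simp only [mem_coe, mem_filter, quadSetAux, mem_univ, true_and] at hq
      obtain ⟨⟨h1, ⟨h2, h3⟩, h4, h5⟩, h6⟩ := hq
      simp [triSetAux, h1, h2, h3]
    · rintro ⟨a, b, c, d⟩ hq ⟨a', b', c', d'⟩ hq' h
      simp only [coe_filter, Set.mem_setOf_eq] at hq hq'
      simp only [Prod.ext_iff] at h ⊢
      obtain ⟨h1, h2, h3⟩ := h
      exact ⟨h1, h2, h3, by rw [← hq.2, ← hq'.2, h3]⟩
  have hoff : ((quadSetAux H).filter (fun q => ¬ q.2.2.1 = q.2.2.2)).card ≤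
      orderedFourCycleCount H := by
    refine Finset.card_le_card_of_injOn (fun q => (q.1, q.2.2.1, q.2.1, q.2.2.2)) ?_ ?_
    · rintro ⟨u, v, x, y⟩ hq
      simp only [mem_coe, mem_filter, quadSetAux, mem_univ, true_and] at hq
      obtain ⟨⟨h1, ⟨h2, h3⟩, h4, h5⟩, h6⟩ := hq
      simp only [orderedFourCycleCount, mem_coe, mem_filter, mem_univ, true_and]
      exact ⟨h2.ne, h1.ne, h4.ne, fun h => h3.ne h.symm, h6, h5.ne, h2, h3.symm, h5,
        h4.symm⟩
    · rintro ⟨a, b, c, d⟩ _ ⟨a', b', c', d'⟩ _ h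
      simp only [Prod.ext_iff] at h ⊢
      tauto
  omega

lemma triSetAux_card_six : (triSetAux H).card = 6 * (H.cliqueFinset 3).card := by
  rw [Finset.card_eq_sum_card_fiberwise
    (f := fun t : V × V × V => ({t.1, t.2.1, t.2.2} : Finset V))
    (t := H.cliqueFinset 3) ?hmem]
  case hmem =>
    rintro ⟨a, b, c⟩ ht
    simp only [triSetAux, mem_coe, mem_filter, mem_univ, true_and] at ht
    exact SimpleGraph.mem_cliqueFinset_iff.2
      (SimpleGraph.is3Clique_triple_iff.2 ⟨ht.1, ht.2.1, ht.2.2⟩)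
  rw [mul_comm, ← smul_eq_mul, ← Finset.sum_const]
  refine Finset.sum_congr rfl fun c hc => ?_
  obtain ⟨hclique, hcard⟩ := SimpleGraph.mem_cliqueFinset_iff.1 hc
  obtain ⟨a, b, d, hab, had, hbd, rfl⟩ := Finset.card_eq_three.1 hcard
  have hAab : H.Adj a b := hclique (by simp) (by simp) hab
  have hAad : H.Adj a d := hclique (by simp) (by simp) had
  have hAbd : H.Adj b d := hclique (by simp) (by simp) hbd
  have hAba : H.Adj b a := hAab.symm
  have hAda : H.Adj d a := hAad.symm
  have hAdb : H.Adj d b := hAbd.symm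
  have hset : (triSetAux H).filter
      (fun t => ({t.1, t.2.1, t.2.2} : Finset V) = {a, b, d}) =
      ({(a, b, d), (a, d, b), (b, a, d), (b, d, a), (d, a, b), (d, b, a)} :
        Finset (V × V × V)) := by
    ext ⟨x, y, z⟩
    simp only [triSetAux, mem_filter, mem_univ, true_and, mem_insert, mem_singleton,
      Prod.mk.injEq]
    constructor
    · rintro ⟨⟨hxy, hxz, hyz⟩, hs⟩
      have hx : x = a ∨ x = b ∨ x = d := by
        have : x ∈ ({a, b, d} : Finset V) := by rw [← hs]; simp
        simpa using this
      have hy : y = a ∨ y = b ∨ y = d := by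
        have : y ∈ ({a, b, d} : Finset V) := by rw [← hs]; simp
        simpa using this
      have hz : z = a ∨ z = b ∨ z = d := by
        have : z ∈ ({a, b, d} : Finset V) := by rw [← hs]; simp
        simpa using this
      have h1 := hxy.ne
      have h2 := hxz.ne
      have h3 := hyz.ne
      rcases hx with rfl | rfl | rfl <;> rcases hy with rfl | rfl | rfl <;>
        rcases hz with rfl | rfl | rfl <;> simp_all
    · rintro (⟨rfl, rfl, rfl⟩ | ⟨rfl, rfl, rfl⟩ | ⟨rfl, rfl, rfl⟩ | ⟨rfl, rfl, rfl⟩ |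
        ⟨rfl, rfl, rfl⟩ | ⟨rfl, rfl, rfl⟩) <;>
      exact ⟨⟨by assumption, by assumption, by assumption⟩, by ext w; simp; try tauto⟩
  rw [hset]
  rw [Finset.card_insert_of_notMem
      (by simp [Prod.ext_iff, hab, had, hbd, hab.symm, had.symm, hbd.symm]),
    Finset.card_insert_of_notMem
      (by simp [Prod.ext_iff, hab, had, hbd, hab.symm, had.symm, hbd.symm]),
    Finset.card_insert_of_notMem
      (by simp [Prod.ext_iff, hab, had, hbd, hab.symm, had.symm, hbd.symm]),
    Finset.card_insert_of_notMem
      (by simp [Prod.ext_iff, hab, had, hbd, hab.symm, had.symm, hbd.symm]),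
    Finset.card_pair (by simp [Prod.ext_iff, hab, had, hbd, hab.symm, had.symm, hbd.symm])]

end Aux

/-- Let `H` be a finite simple graph with `E ≥ 1` edges, `T`
triangles and `F` four-cycles.  Then `3T(3T − E) ≤ 4FE` (equivalently, with
`r_3 = T/E` and `r_4 = F/E`, `3r_3(3r_3 − 1) ≤ 4r_4`).  Here `T` is the number of
triangles (3-cliques) and `F` is the number of four-cycle subgraphs, i.e. the
number of ordered four-cycle tuples divided by 8. -/
theorem triangle_fourcycle_ratio_ineq {V : Type*} [Fintype V] [DecidableEq V]
    (H : SimpleGraph V) [DecidableRel H.Adj]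
    (E T F : ℝ)
    (hE : E = (H.edgeFinset.card : ℝ)) (hE1 : 1 ≤ E)
    (hT : T = ((H.cliqueFinset 3).card : ℝ))
    (hF : F = (orderedFourCycleCount H : ℝ) / 8) :
    3 * T * (3 * T - E) ≤ 4 * F * E := by
  have CS : ((∑ p ∈ pairSetAux H, comNAux H p : ℕ) : ℝ) ^ 2 ≤
      ((pairSetAux H).card : ℝ) * ((∑ p ∈ pairSetAux H, (comNAux H p) ^ 2 : ℕ) : ℝ) := by
    push_cast
    exact sq_sum_le_card_mul_sum_sq
  rw [← triSetAux_card_sum, ← quadSetAux_card_sum, triSetAux_card_six, pairSetAux_card] at CS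
  have hle := quadSetAux_card_le H
  rw [triSetAux_card_six] at hle
  have hle' : ((quadSetAux H).card : ℝ) ≤
      6 * ((H.cliqueFinset 3).card : ℝ) + (orderedFourCycleCount H : ℝ) := by
    exact_mod_cast hle
  have key : (6 * (T : ℝ)) ^ 2 ≤ 2 * E * (6 * T + orderedFourCycleCount H) := by
    rw [hT, hE]
    push_cast at CS ⊢
    nlinarith [hle', CS]
  rw [hF]
  have hf0 : (0 : ℝ) ≤ (orderedFourCycleCount H : ℝ) := Nat.cast_nonneg _
  nlinarith [key]
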